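/- Every μ-obstruction of type II either contains a K_μ subgraph or, for every positive integer k, contains an induced K_{k,ω}. -/

import Mathlib

open Cardinal

universe u v

/-- A well-ordering of the vertices of `G` in which every vertex has
fewer than `μ` neighbours preceding it (a *good* well-ordering for `μ`). -/
def HasGoodOrder {V : Type u} (G : SimpleGraph V) (μ : Cardinal.{u}) : Prop :=
  ∃ r : V → V → Prop, IsWellOrder V r ∧ ∀ v : V, #{w : V | G.Adj v w ∧ r w v} < μ

/-- The colouring number of `G`: the least cardinal `κ` admitting a
well-ordering of the vertices in which each vertex has fewer than `κ`
earlier neighbours. -/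
noncomputable def col {V : Type u} (G : SimpleGraph V) : Cardinal.{u} :=
  sInf {μ : Cardinal.{u} | HasGoodOrder G μ}

/-- `X` is robust (for `μ`): every vertex outside `X` has fewer than `μ`
neighbours inside `X`. -/
def Robust {V : Type u} (G : SimpleGraph V) (μ : Cardinal.{u}) (X : Set V) : Prop :=
  ∀ v ∉ X, #(G.neighborSet v ∩ X : Set V) < μ

/-- `G` contains a `μ`-barricade as a subgraph: disjoint vertex sets `A`, `B`
with `|A| < |B|` such that every vertex of `B` has at least `μ` neighbours in `A`. -/
def HasBarricade {V : Type u} (G : SimpleGraph V) (μ : Cardinal.{u}) : Prop :=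
  ∃ A B : Set V, Disjoint A B ∧ #A < #B ∧
    ∀ b ∈ B, μ ≤ #(G.neighborSet b ∩ A : Set V)

/-- `G` contains a `μ`-obstruction of type I as a subgraph: disjoint sets `A`, `B`
with `|A| = λ ≥ μ`, `|B| = λ⁺`, every vertex of `B` having at least `μ`
neighbours in `A` and every vertex of `A` having `λ⁺` neighbours in `B`. -/
def HasTypeIObstruction {V : Type u} (G : SimpleGraph V) (μ : Cardinal.{u}) : Prop :=
  ∃ (A B : Set V) (lam : Cardinal.{u}), Disjoint A B ∧ μ ≤ lam ∧
    #A = lam ∧ #B = Order.succ lam ∧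
    (∀ b ∈ B, μ ≤ #(G.neighborSet b ∩ A : Set V)) ∧
    (∀ a ∈ A, #(G.neighborSet a ∩ B : Set V) = Order.succ lam)

/-- `G` itself is a `μ`-obstruction of type I: a bipartite graph with
bipartition `(A, B)` satisfying the type I conditions. -/
def IsTypeIObstruction {V : Type u} (G : SimpleGraph V) (μ : Cardinal.{u}) : Prop :=
  ∃ (A B : Set V) (lam : Cardinal.{u}), Disjoint A B ∧ A ∪ B = Set.univ ∧
    (∀ a b, G.Adj a b → (a ∈ A ∧ b ∈ B) ∨ (a ∈ B ∧ b ∈ A)) ∧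
    μ ≤ lam ∧ #A = lam ∧ #B = Order.succ lam ∧
    (∀ b ∈ B, μ ≤ #(G.neighborSet b ∩ A : Set V)) ∧
    (∀ a ∈ A, #(G.neighborSet a ∩ B : Set V) = Order.succ lam)

/-- `C` is closed and unbounded in the ordinal `o`. -/
def IsClubIn (C : Set Ordinal.{v}) (o : Ordinal.{v}) : Prop :=
  (∀ a < o, ∃ b ∈ C, a ≤ b ∧ b < o) ∧
  (∀ a < o, a ≠ 0 → sSup (C ∩ Set.Iio a) = a → a ∈ C)

/-- `S` is stationary in the ordinal `o`: it meets every club subset of `o`. -/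
def IsStationaryIn (S : Set Ordinal.{v}) (o : Ordinal.{v}) : Prop :=
  ∀ C : Set Ordinal.{v}, IsClubIn C o → (S ∩ C ∩ Set.Iio o).Nonempty

/-- The set `T_H` of vertices `α` (ordinals) with `cf α = cf μ`, whose set of
neighbours below `α` has order type `μ` and supremum `α`. -/
noncomputable def typeIITarget (H : SimpleGraph Ordinal.{v}) (μ : Cardinal.{v}) :
    Set Ordinal.{v} :=
  {α | α.cof = μ.ord.cof ∧
    Ordinal.type (Subrel ((· < ·) : Ordinal.{v} → Ordinal.{v} → Prop)
      (· ∈ H.neighborSet α ∩ Set.Iio α)) = Ordinal.lift.{v + 1} μ.ord ∧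
    sSup (H.neighborSet α ∩ Set.Iio α) = α}

/-- `H` is a `μ`-obstruction of type II with vertex set the regular cardinal
`κ > μ` (realised as the ordinals below `κ`): `T_H` is stationary in `κ`. -/
def IsTypeIIObstruction (H : SimpleGraph Ordinal.{v}) (μ κ : Cardinal.{v}) : Prop :=
  μ < κ ∧ κ.IsRegular ∧ (∀ a b, H.Adj a b → a < κ.ord ∧ b < κ.ord) ∧
  IsStationaryIn (typeIITarget H μ) κ.ord

/-- `G` contains a `μ`-obstruction of type II as a subgraph. -/
def HasTypeIIObstruction {V : Type u} (G : SimpleGraph V) (μ : Cardinal.{v}) : Prop :=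
  ∃ (κ : Cardinal.{v}) (H : SimpleGraph Ordinal.{v}) (f : Ordinal.{v} → V),
    Set.InjOn f (Set.Iio κ.ord) ∧ (∀ a b, H.Adj a b → G.Adj (f a) (f b)) ∧
    IsTypeIIObstruction H μ κ

/-- `G` contains a complete subgraph on `μ` vertices. -/
def HasCompleteSubgraph {V : Type u} (G : SimpleGraph V) (μ : Cardinal.{u}) : Prop :=
  ∃ S : Set V, #S = μ ∧ S.Pairwise G.Adj

/-- `G` contains an induced copy of the complete bipartite graph `K_{k,ω}`. -/
def HasInducedKkOmega {V : Type u} (G : SimpleGraph V) (k : ℕ) : Prop :=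
  ∃ A B : Set V, Disjoint A B ∧ #A = (k : Cardinal.{u}) ∧ #B = ℵ₀ ∧
    (∀ a ∈ A, ∀ b ∈ B, G.Adj a b) ∧
    (∀ a ∈ A, ∀ a' ∈ A, a ≠ a' → ¬ G.Adj a a') ∧
    (∀ b ∈ B, ∀ b' ∈ B, b ≠ b' → ¬ G.Adj b b')


section St15Aux
open Set
namespace St15


theorem isClubIn_univ {o : Ordinal.{v}} : IsClubIn Set.univ o :=
  ⟨fun a ha => ⟨a, trivial, le_rfl, ha⟩, fun _ _ _ _ => trivial⟩

theorem isClubIn_Ici {o a : Ordinal.{v}} (ha : a < o) :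
    IsClubIn {b | a ≤ b} o := by
  constructor
  · intro x _
    rcases le_total a x with h | h
    · exact ⟨x, by simpa using h, le_rfl, ‹x < o›⟩
    · exact ⟨a, by simp, h, ha⟩
  · intro x hx hx0 hsup
    by_contra hax
    simp only [Set.mem_setOf_eq, not_le] at hax
    have hempty : ({b | a ≤ b} ∩ Set.Iio x : Set Ordinal) = ∅ := by
      ext y
      simp only [Set.mem_inter_iff, Set.mem_setOf_eq, Set.mem_Iio, Set.mem_empty_iff_false,
        iff_false, not_and]
      intro hay
      exact not_lt.mpr (le_of_lt (lt_of_lt_of_le hax hay))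
    rw [hempty, csSup_empty] at hsup
    exact hx0 (by simpa using hsup.symm)

theorem lift_cof_le_of_unbounded {o : Ordinal.{0}} {X : Set Ordinal.{0}}
    (hX : X ⊆ Set.Iio o) (hu : ∀ a < o, ∃ x ∈ X, a ≤ x) :
    Cardinal.lift.{1} o.cof ≤ #X := by
  classical
  let e := @Ordinal.ToType.mk o
  let g : X → o.ToType := fun x => e ⟨x.1, hX x.2⟩
  have hginj : Function.Injective g := fun x y hxy => by
    have h2 : (⟨x.1, hX x.2⟩ : Set.Iio o) = ⟨y.1, hX y.2⟩ := e.injective hxy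
    have h3 : x.1 = y.1 := Subtype.mk_eq_mk.mp h2
    exact Subtype.ext h3
  have hunb : Set.Unbounded (· < ·) (Set.range g) := by
    intro w
    obtain ⟨x, hxX, hax⟩ := hu (e.symm w).1 (e.symm w).2
    refine ⟨g ⟨x, hxX⟩, Set.mem_range_self _, fun hlt => ?_⟩
    have h3 : (⟨x, hX hxX⟩ : Set.Iio o) < e.symm w := by
      rw [← e.lt_iff_lt]
      simpa [g, e] using hlt
    exact absurd hax (not_le.mpr h3)
  have h1 : o.cof ≤ #(Set.range g) := by
    rw [← Ordinal.cof_toType]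
    exact Order.cof_le (fun w => by obtain ⟨b, hb, hn⟩ := hunb w; exact ⟨b, hb, not_lt.mp hn⟩)
  calc Cardinal.lift.{1} o.cof ≤ Cardinal.lift.{1} #(Set.range g) := Cardinal.lift_le.2 h1
    _ = Cardinal.lift.{1} #X := Cardinal.mk_range_eq_lift hginj
    _ = #X := Cardinal.lift_id _

theorem bounded_of_card_lt {o : Ordinal.{0}} {X : Set Ordinal.{0}} (hX : X ⊆ Set.Iio o)
    (hcard : #X < Cardinal.lift.{1} o.cof) : ∃ b < o, ∀ x ∈ X, x ≤ b := by
  by_contra h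
  push_neg at h
  exact absurd (lift_cof_le_of_unbounded hX (fun a ha => by
    obtain ⟨x, hx, hax⟩ := h a ha
    exact ⟨x, hx, hax.le⟩)) (not_le.mpr hcard)

theorem csSup_lt_of_card_lt {o : Ordinal.{0}} {X : Set Ordinal.{0}} (hX : X ⊆ Set.Iio o)
    (hcard : #X < Cardinal.lift.{1} o.cof) : sSup X < o := by
  obtain ⟨b, hb, hbb⟩ := bounded_of_card_lt hX hcard
  exact lt_of_le_of_lt (csSup_le' hbb) hb

theorem stationary_unbounded {o : Ordinal.{0}} {S : Set Ordinal.{0}}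
    (hS : IsStationaryIn S o) (a : Ordinal) (ha : a < o) :
    ∃ x ∈ S ∩ Set.Iio o, a ≤ x := by
  obtain ⟨x, ⟨hxS, hxC⟩, hxo⟩ := hS _ (isClubIn_Ici ha)
  exact ⟨x, ⟨hxS, hxo⟩, hxC⟩

theorem stationary_card {κ : Cardinal.{0}} (hreg : κ.IsRegular) {S : Set Ordinal.{0}}
    (hS : IsStationaryIn S κ.ord) : Cardinal.lift.{1} κ ≤ #(S ∩ Set.Iio κ.ord : Set Ordinal) := by
  have h := lift_cof_le_of_unbounded (o := κ.ord) (X := S ∩ Set.Iio κ.ord)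
    Set.inter_subset_right (fun a ha => stationary_unbounded hS a ha)
  rwa [hreg.cof_eq] at h


theorem fodor {κ : Cardinal.{0}} (hreg : κ.IsRegular) (hκ : ℵ₀ < κ)
    {S : Set Ordinal.{0}} (hS : IsStationaryIn S κ.ord)
    (f : Ordinal.{0} → Ordinal.{0}) (hf : ∀ α ∈ S, f α < α) :
    ∃ b, IsStationaryIn {α | α ∈ S ∧ f α = b} κ.ord := by
  classical
  by_contra hcon
  push_neg at hcon
  have hclub : ∀ b, ∃ C, IsClubIn C κ.ord ∧
      ({α | α ∈ S ∧ f α = b} ∩ C ∩ Set.Iio κ.ord) = ∅ := by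
    intro b
    have h1 := hcon b
    unfold IsStationaryIn at h1
    push_neg at h1
    obtain ⟨C, hC1, hC2⟩ := h1
    exact ⟨C, hC1, hC2⟩
  choose C hCclub hCempty using hclub
  set o := κ.ord with ho
  have hcof : o.cof = κ := hreg.cof_eq
  have holim : Order.IsSuccLimit o := Cardinal.isSuccLimit_ord hreg.1
  have hℵ : (ℵ₀ : Cardinal.{1}) < Cardinal.lift.{1} κ := by
    have := Cardinal.lift_lt.{0,1}.mpr hκ
    rwa [Cardinal.lift_aleph0] at this
  have hsupbd : ∀ X : Set Ordinal.{0}, X ⊆ Set.Iio o → #X < Cardinal.lift.{1} κ →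
      (sSup X < o ∧ ∀ y ∈ X, y ≤ sSup X) := by
    intro X hX hc
    refine ⟨csSup_lt_of_card_lt hX (by rwa [hcof]), fun y hy => le_csSup ⟨o, fun z hz => (hX hz).le⟩ hy⟩
  let cpt : Ordinal → Ordinal → Ordinal := fun γ x =>
    if hx : x < o then ((hCclub γ).1 x hx).choose else 0
  have hcpt : ∀ γ, ∀ x, (hx : x < o) → cpt γ x ∈ C γ ∧ x ≤ cpt γ x ∧ cpt γ x < o := by
    intro γ x hx
    have hspec := ((hCclub γ).1 x hx).choose_spec
    simp only [cpt, dif_pos hx]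
    exact ⟨hspec.1, hspec.2.1, hspec.2.2⟩
  let nxt : Ordinal → Ordinal := fun x =>
    Order.succ (sSup (insert x ((fun γ => cpt γ x) '' Set.Iio x)))
  have hnxt : ∀ x, (hx : x < o) →
      x < nxt x ∧ nxt x < o ∧ ∀ γ < x, ∃ c ∈ C γ, x ≤ c ∧ c < nxt x := by
    intro x hx
    set X := insert x ((fun γ => cpt γ x) '' Set.Iio x) with hX
    have hXsub : X ⊆ Set.Iio o := by
      rintro y hy
      rcases Set.mem_insert_iff.mp hy with rfl | ⟨γ, hγ, rfl⟩
      · exact hx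
      · exact (hcpt γ x hx).2.2
    have hXcard : #X < Cardinal.lift.{1} κ := by
      calc #X ≤ #((fun γ => cpt γ x) '' Set.Iio x) + 1 := Cardinal.mk_insert_le
        _ ≤ #(Set.Iio x) + 1 := add_le_add_left Cardinal.mk_image_le 1
        _ = Cardinal.lift.{1} x.card + 1 := by rw [Ordinal.mk_Iio_ordinal]
        _ < Cardinal.lift.{1} κ := Cardinal.add_lt_of_lt hℵ.le
            (Cardinal.lift_lt.mpr (Cardinal.lt_ord.mp (ho ▸ hx))) (one_lt_aleph0.trans hℵ)
    obtain ⟨hsup, hub⟩ := hsupbd X hXsub hXcard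
    refine ⟨lt_of_le_of_lt (hub x (Set.mem_insert _ _)) (Order.lt_succ _), holim.succ_lt hsup, ?_⟩
    intro γ hγ
    obtain ⟨h1, h2, _⟩ := hcpt γ x hx
    exact ⟨cpt γ x, h1, h2,
      lt_of_le_of_lt (hub _ (Set.mem_insert_of_mem _ ⟨γ, hγ, rfl⟩)) (Order.lt_succ _)⟩
  set D : Set Ordinal.{0} := {β | ∀ γ < β, β ∈ C γ} with hD
  have hDclosed : ∀ a < o, a ≠ 0 → sSup (D ∩ Set.Iio a) = a → a ∈ D := by
    intro a ha ha0 hsup γ hγ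
    have hne : (D ∩ Set.Iio a).Nonempty := by
      by_contra hemp
      rw [Set.not_nonempty_iff_eq_empty.mp hemp, csSup_empty] at hsup
      exact ha0 (by simpa using hsup.symm)
    have hEbdd : BddAbove (D ∩ Set.Iio a ∩ Set.Ioi γ) := ⟨a, fun y hy => hy.1.2.le⟩
    have hEsub : D ∩ Set.Iio a ∩ Set.Ioi γ ⊆ C γ ∩ Set.Iio a := by
      rintro β ⟨⟨hβD, hβa⟩, hβγ⟩
      exact ⟨hβD γ hβγ, hβa⟩
    have hEsup : a ≤ sSup (D ∩ Set.Iio a ∩ Set.Ioi γ) := by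
      have h1 : ∀ y ∈ D ∩ Set.Iio a, y ≤ γ ⊔ sSup (D ∩ Set.Iio a ∩ Set.Ioi γ) := by
        intro y hy
        rcases le_or_gt y γ with h | h
        · exact le_sup_of_le_left h
        · exact le_sup_of_le_right (le_csSup hEbdd ⟨hy, h⟩)
      have h2 : a ≤ γ ⊔ sSup (D ∩ Set.Iio a ∩ Set.Ioi γ) := by
        conv_lhs => rw [← hsup]
        exact csSup_le hne h1
      by_contra h3
      push_neg at h3
      exact absurd h2 (not_le.mpr (sup_lt_iff.mpr ⟨hγ, h3⟩))
    have hEne : (D ∩ Set.Iio a ∩ Set.Ioi γ).Nonempty := by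
      by_contra hemp
      rw [Set.not_nonempty_iff_eq_empty.mp hemp, csSup_empty] at hEsup
      have : a = 0 := le_antisymm (by simpa using hEsup) zero_le
      exact ha0 this
    have hfin : sSup (C γ ∩ Set.Iio a) = a := by
      apply le_antisymm (csSup_le' fun y hy => hy.2.le)
      calc a ≤ sSup (D ∩ Set.Iio a ∩ Set.Ioi γ) := hEsup
        _ ≤ sSup (C γ ∩ Set.Iio a) :=
            csSup_le_csSup ⟨a, fun y hy => hy.2.le⟩ hEne hEsub
    exact (hCclub γ).2 a ha ha0 hfin
  have hDunb : ∀ a < o, ∃ b ∈ D, a ≤ b ∧ b < o := by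
    intro a ha
    let x : ℕ → Ordinal := fun n => Nat.rec a (fun _ xn => nxt xn) n
    have hx0 : x 0 = a := rfl
    have hxS : ∀ n, x (n + 1) = nxt (x n) := fun n => rfl
    have hxlt : ∀ n, x n < o := by
      intro n
      induction n with
      | zero => exact ha
      | succ n ih => rw [hxS]; exact (hnxt _ ih).2.1
    have hxmono : StrictMono x :=
      strictMono_nat_of_lt_succ (fun n => by rw [hxS]; exact (hnxt _ (hxlt n)).1)
    have hrsub : Set.range x ⊆ Set.Iio o := by rintro _ ⟨n, rfl⟩; exact hxlt n
    have hrcard : #(Set.range x) < Cardinal.lift.{1} κ := by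
      have hc : (Set.range x).Countable := Set.countable_range x
      have := hc.to_subtype
      exact lt_of_le_of_lt Cardinal.mk_le_aleph0 hℵ
    have hbdd : BddAbove (Set.range x) := ⟨o, fun y hy => (hrsub hy).le⟩
    set b := sSup (Set.range x) with hb
    have hblt : b < o := csSup_lt_of_card_lt hrsub (by rwa [hcof])
    have hab : a ≤ b := hx0 ▸ le_csSup hbdd ⟨0, rfl⟩
    refine ⟨b, ?_, hab, hblt⟩
    intro γ hγb
    have hexn : ∃ n, γ < x n := by
      refine Classical.byContradiction fun hno => ?_
      push_neg at hno
      have : b ≤ γ := csSup_le ⟨a, ⟨0, rfl⟩⟩ (by rintro _ ⟨n, rfl⟩; exact hno n)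
      exact absurd hγb (not_lt.mpr this)
    obtain ⟨n, hn⟩ := hexn
    have hb0 : b ≠ 0 := fun h => not_lt_zero (h ▸ hγb)
    apply (hCclub γ).2 b hblt hb0
    apply le_antisymm (csSup_le' fun y hy => hy.2.le)
    have key : ∀ m, n ≤ m → ∃ c ∈ C γ ∩ Set.Iio b, x m ≤ c := by
      intro m hm
      have hγxm : γ < x m := lt_of_lt_of_le hn (hxmono.monotone hm)
      obtain ⟨c, hcC, hxc, hclt⟩ := (hnxt (x m) (hxlt m)).2.2 γ hγxm
      refine ⟨c, ⟨hcC, lt_of_lt_of_le hclt ?_⟩, hxc⟩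
      rw [← hxS]
      exact le_csSup hbdd ⟨m + 1, rfl⟩
    have hub2 : ∀ j, x j ≤ sSup (C γ ∩ Set.Iio b) := by
      intro j
      obtain ⟨c, hc, hxc⟩ := key (max j n) (le_max_right _ _)
      exact le_trans (hxmono.monotone (le_max_left j n))
        (le_trans hxc (le_csSup ⟨b, fun y hy => hy.2.le⟩ hc))
    exact csSup_le ⟨a, ⟨0, rfl⟩⟩ (by rintro _ ⟨j, rfl⟩; exact hub2 j)
  obtain ⟨α, ⟨hαS, hαD⟩, hαo⟩ := hS D ⟨hDunb, hDclosed⟩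
  have hmem : α ∈ ({β | β ∈ S ∧ f β = f α} ∩ C (f α) ∩ Set.Iio o) :=
    ⟨⟨⟨hαS, rfl⟩, hαD (f α) (hf α hαS)⟩, hαo⟩
  rw [hCempty (f α)] at hmem
  exact hmem


def InfClique {V : Type u} (r : V → V → Prop) : Prop :=
  ∃ g : ℕ → V, Function.Injective g ∧ ∀ m n, m ≠ n → r (g m) (g n)

def IndepOn {V : Type u} (r : V → V → Prop) (S : Set V) : Prop :=
  ∀ x ∈ S, ∀ y ∈ S, x ≠ y → ¬ r x y

theorem degree_reduction {V : Type u} {r : V → V → Prop} (hsym : Symmetric r)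
    (hnc : ¬ InfClique r) (hV : ℵ₀ ≤ #V) :
    ∃ Y : Set V, #Y = #V ∧ ∀ y ∈ Y, #({w ∈ Y | r y w}) < #V := by
  classical
  let CN : Finset V → Set V := fun s => {v | v ∉ s ∧ ∀ x ∈ s, r x v}
  let Good : Finset V → Prop := fun s => (↑s : Set V).Pairwise r ∧ #(CN s) = #V
  by_cases hext : ∀ s, Good s → ∃ v ∈ CN s, Good (insert v s)
  · exfalso
    have hGood0 : Good ∅ := by
      constructor
      · simp [Set.Pairwise]
      · have h1 : CN ∅ = Set.univ := by ext v; simp [CN]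
        rw [h1, Cardinal.mk_univ]
    let next : {s // Good s} → {s // Good s} := fun s =>
      ⟨insert (hext s.1 s.2).choose s.1, ((hext s.1 s.2).choose_spec).2⟩
    let F : ℕ → {s // Good s} := fun n => Nat.rec ⟨∅, hGood0⟩ (fun _ s => next s) n
    let g : ℕ → V := fun n => (hext (F n).1 (F n).2).choose
    have hcn : ∀ n, g n ∈ CN (F n).1 := fun n => ((hext (F n).1 (F n).2).choose_spec).1
    have hFS : ∀ n, (F (n + 1)).1 = insert (g n) (F n).1 := fun n => rfl
    have hmem : ∀ m n, m < n → g m ∈ (F n).1 := by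
      intro m n h
      induction n with
      | zero => omega
      | succ n ih =>
        rw [hFS]
        rcases Nat.lt_succ_iff_lt_or_eq.mp h with h | h
        · exact Finset.mem_insert_of_mem (ih h)
        · subst h; exact Finset.mem_insert_self _ _
    have hnotmem : ∀ n, g n ∉ (F n).1 := fun n => (hcn n).1
    have hr : ∀ m n, m < n → r (g m) (g n) := fun m n h => (hcn n).2 (g m) (hmem m n h)
    apply hnc
    refine ⟨g, ?_, ?_⟩
    · intro m n hmn
      by_contra hne
      rcases lt_or_gt_of_ne hne with h | h
      · exact hnotmem n (hmn ▸ hmem m n h)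
      · exact hnotmem m (hmn.symm ▸ hmem n m h)
    · intro m n hmn
      rcases lt_or_gt_of_ne hmn with h | h
      · exact hr m n h
      · exact hsym (hr n m h)
  · push_neg at hext
    obtain ⟨s, hGood, hnoext⟩ := hext
    refine ⟨CN s, hGood.2, ?_⟩
    intro y hy
    by_contra hbig
    push_neg at hbig
    have hEq : #({w ∈ CN s | r y w}) = #V :=
      le_antisymm (Cardinal.mk_set_le _) hbig
    apply hnoext y hy
    constructor
    · rw [Finset.coe_insert]
      apply hGood.1.insert
      intro x hx hne
      exact ⟨hsym (hy.2 x hx), hy.2 x hx⟩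
    · apply le_antisymm (Cardinal.mk_set_le _)
      by_contra hne2
      push_neg at hne2
      have hsub : ({w ∈ CN s | r y w} \ (insert y ↑s) : Set V) ⊆ CN (insert y s) := by
        rintro w ⟨⟨⟨hws, hwall⟩, hryw⟩, hwni⟩
        refine ⟨by simpa using hwni, ?_⟩
        intro x hx
        rcases Finset.mem_insert.mp hx with rfl | hx
        · exact hryw
        · exact hwall x hx
      have hd : #({w ∈ CN s | r y w} \ (insert y ↑s) : Set V) ≤ #(CN (insert y s)) :=
        Cardinal.mk_le_mk_of_subset hsub
      have hfin : #(insert y ↑s : Set V) < ℵ₀ := (s.finite_toSet.insert y).lt_aleph0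
      have hle := Cardinal.le_mk_diff_add_mk ({w ∈ CN s | r y w}) (insert y ↑s)
      rw [hEq] at hle
      exact absurd (lt_of_le_of_lt hle (Cardinal.add_lt_of_lt hV
        (lt_of_le_of_lt hd hne2) (lt_of_lt_of_le hfin hV))) (lt_irrefl _)

theorem greedy {W : Type u} {r : W → W → Prop} (hsym : Symmetric r)
    (hreg : (#W).IsRegular) (hdeg : ∀ w : W, #{x | r w x} < #W) :
    ∃ S : Set W, #S = #W ∧ IndepOn r S := by
  classical
  have hW : ℵ₀ ≤ #W := hreg.1
  have hWne : Nonempty W := Cardinal.mk_ne_zero_iff.mp (aleph0_pos.trans_le hW).ne'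
  set Λ := (#W).ord.ToType with hΛ
  letI : IsWellOrder Λ (· < ·) := isWellOrder_lt
  have hΛcard : #Λ = #W := by rw [Cardinal.mk_toType, Cardinal.card_ord]
  set B : W → Set W := fun w => insert w {x | r w x ∨ r x w} with hB
  have hBcard : ∀ w, #(B w) < #W := by
    intro w
    have h1 : {x | r w x ∨ r x w} = {x | r w x} := by
      ext x
      exact ⟨fun h => h.elim id (fun h => hsym h), fun h => Or.inl h⟩
    calc #(B w) ≤ #{x | r w x ∨ r x w} + 1 := Cardinal.mk_insert_le
      _ < #W := by
          rw [h1]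
          exact Cardinal.add_lt_of_lt hW (hdeg w) (one_lt_aleph0.trans_le hW)
  set F : ∀ w : Λ, (∀ w', w' < w → W) → W := fun w ih =>
    if h : (Set.univ \ ⋃ (w' : {x : Λ // x < w}), B (ih w'.1 w'.2)).Nonempty then h.choose
    else Classical.arbitrary W with hF
  set f : Λ → W := WellFounded.fix wellFounded_lt F with hf
  have hfix : ∀ w, f w = F w (fun w' _ => f w') := fun w =>
    WellFounded.fix_eq wellFounded_lt F w
  have hU : ∀ w : Λ, #(⋃ (w' : {x : Λ // x < w}), B (f w'.1)) < #W := by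
    intro w
    have hι : #{x : Λ // x < w} < #W := by
      have h2 := Cardinal.card_typein_toType_lt (#W) w
      exact Cardinal.mk_Iio_toType_ord_lt w
    calc #(⋃ (w' : {x : Λ // x < w}), B (f w'.1))
        ≤ #{x : Λ // x < w} * ⨆ (w' : {x : Λ // x < w}), #(B (f w'.1)) :=
          Cardinal.mk_iUnion_le _
      _ < #W := Cardinal.mul_lt_of_lt hW hι
          (Ordinal.iSup_lt (by rw [hreg.cof_eq]; exact hι) (fun w' => hBcard _))
  have hgood : ∀ w : Λ, f w ∈ Set.univ \ ⋃ (w' : {x : Λ // x < w}), B (f w'.1) := by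
    intro w
    have hne : (Set.univ \ ⋃ (w' : {x : Λ // x < w}), B (f w'.1)).Nonempty := by
      by_contra hemp
      rw [Set.not_nonempty_iff_eq_empty, Set.diff_eq_empty] at hemp
      have h3 : #W ≤ #(⋃ (w' : {x : Λ // x < w}), B (f w'.1)) := by
        calc #W = #(Set.univ : Set W) := Cardinal.mk_univ.symm
          _ ≤ _ := Cardinal.mk_le_mk_of_subset hemp
      exact absurd h3 (not_le.mpr (hU w))
    rw [hfix w]
    simp only [hF]
    rw [dif_pos hne]
    exact hne.choose_spec
  have hnotB : ∀ w w' : Λ, w' < w → f w ∉ B (f w') := by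
    intro w w' hlt hmem
    exact (hgood w).2 (Set.mem_iUnion.mpr ⟨⟨w', hlt⟩, hmem⟩)
  have hinj : Function.Injective f := by
    intro a b hab
    by_contra hne
    rcases lt_or_gt_of_ne hne with h | h
    · exact hnotB b a h (by rw [← hab]; exact Set.mem_insert _ _)
    · exact hnotB a b h (by rw [hab]; exact Set.mem_insert _ _)
  refine ⟨Set.range f, by rw [Cardinal.mk_range_eq f hinj, hΛcard], ?_⟩
  rintro _ ⟨a, rfl⟩ _ ⟨b, rfl⟩ hne hr
  rcases lt_or_gt_of_ne (fun h : a = b => hne (congrArg f h)) with h | h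
  · exact hnotB b a h (Set.mem_insert_of_mem _ (Or.inl hr))
  · exact hnotB a b h (Set.mem_insert_of_mem _ (Or.inr hr))

theorem indep_of_regular {W : Type u} {r : W → W → Prop} (hsym : Symmetric r)
    (hnc : ¬ InfClique r) (hreg : (#W).IsRegular) :
    ∃ S : Set W, #S = #W ∧ IndepOn r S := by
  classical
  obtain ⟨Y, hYcard, hYdeg⟩ := degree_reduction hsym hnc hreg.1
  have hreg' : (#(↥Y)).IsRegular := by rw [hYcard]; exact hreg
  have hsym' : Symmetric (fun a b : ↥Y => r a.1 b.1) := fun a b h => hsym h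
  have hdeg' : ∀ w : ↥Y, #{x : ↥Y | r w.1 x.1} < #(↥Y) := by
    intro w
    rw [hYcard]
    have hinj : Function.Injective
        (fun x : {x : ↥Y // r w.1 x.1} => (⟨x.1.1, x.1.2, x.2⟩ : {v ∈ Y | r w.1 v})) := by
      intro a b hab
      have h1 : a.1.1 = b.1.1 := Subtype.mk_eq_mk.mp hab
      exact Subtype.ext (Subtype.ext h1)
    exact lt_of_le_of_lt (Cardinal.mk_le_of_injective hinj) (hYdeg w.1 w.2)
  obtain ⟨S', hS'card, hS'ind⟩ := greedy hsym' hreg' hdeg'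
  refine ⟨Subtype.val '' S', ?_, ?_⟩
  · rw [Cardinal.mk_image_eq Subtype.val_injective, hS'card, hYcard]
  · rintro _ ⟨a, ha, rfl⟩ _ ⟨b, hb, rfl⟩ hne hr
    exact hS'ind a ha b hb (fun h => hne (congrArg _ h)) hr


theorem indep_of_singular {W : Type u} {r : W → W → Prop} (hsym : Symmetric r)
    (hnc : ¬ InfClique r) (hW : ℵ₀ ≤ #W) (hns : ¬ (#W).IsRegular) :
    ∃ S : Set W, #S = #W ∧ IndepOn r S := by
  classical
  obtain ⟨Y, hYcard, hYdeg⟩ := degree_reduction hsym hnc hW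
  set c := #W with hc
  set ρ := c.ord.cof with hρ
  have hρc : ρ < c := lt_of_le_of_ne (Ordinal.cof_ord_le c) (fun h => hns ⟨hW, h.ge⟩)
  have hρℵ : ℵ₀ ≤ ρ := Ordinal.aleph0_le_cof.mpr (Cardinal.isSuccLimit_ord hW)
  have hℵc : ℵ₀ < c := lt_of_le_of_lt hρℵ hρc
  have hlimit : ∀ d, d < c → Order.succ d < c := by
    intro d hd
    rcases lt_or_ge d ℵ₀ with h | h
    · exact lt_of_lt_of_le (Cardinal.isSuccLimit_aleph0.succ_lt h) hW
    · rcases lt_or_eq_of_le (Order.succ_le_of_lt hd) with h2 | h2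
      · exact h2
      · exact absurd (h2 ▸ Cardinal.isRegular_succ h) hns
  set J := ρ.ord.ToType with hJ
  letI : IsWellOrder J (· < ·) := isWellOrder_lt
  letI : IsWellOrder c.ord.ToType (· < ·) := isWellOrder_lt
  have hJcard : #J = ρ := by rw [hJ, Cardinal.mk_toType, Cardinal.card_ord]
  obtain ⟨Sc, hScunb, hSccard⟩ :=
    Order.exists_cof_eq (α := c.ord.ToType)
  rw [Ordinal.cof_toType] at hSccard
  have e : J ≃ ↥Sc := Classical.choice (Cardinal.eq.mp (by rw [hJcard, hSccard]))
  set lam : J → Cardinal.{u} := fun j =>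
    Order.succ ((Ordinal.typein ((· < ·) : c.ord.ToType → c.ord.ToType → Prop) (e j).1).card ⊔ ℵ₀)
    with hlam
  have hlamc : ∀ j, lam j < c := by
    intro j
    apply hlimit
    have h1 := Ordinal.typein_lt_type ((· < ·) : c.ord.ToType → c.ord.ToType → Prop) (e j).1
    rw [Ordinal.type_toType] at h1
    exact sup_lt_iff.mpr ⟨Cardinal.lt_ord.mp h1, hℵc⟩
  have hlamcof : ∀ d, d < c → ∃ j, d < lam j := by
    intro d hd
    have hdo : d.ord < Ordinal.type ((· < ·) : c.ord.ToType → c.ord.ToType → Prop) := by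
      rw [Ordinal.type_toType]; exact Cardinal.ord_lt_ord.mpr hd
    obtain ⟨s, hsS, hsw⟩ := hScunb (Ordinal.enum _ ⟨d.ord, hdo⟩)
    refine ⟨e.symm ⟨s, hsS⟩, ?_⟩
    have h2 : d.ord ≤ Ordinal.typein ((· < ·) : c.ord.ToType → c.ord.ToType → Prop) s := by
      rw [← Ordinal.typein_enum ((· < ·) : c.ord.ToType → c.ord.ToType → Prop) hdo]
      exact (Ordinal.typein_le_typein _).mpr (not_lt.mpr hsw)
    have h3 : d ≤ (Ordinal.typein ((· < ·) : c.ord.ToType → c.ord.ToType → Prop) s).card := by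
      have h4 := Ordinal.card_le_card h2
      rwa [Cardinal.card_ord] at h4
    have h4 : ((e (e.symm ⟨s, hsS⟩)).1 : c.ord.ToType) = s := by rw [Equiv.apply_symm_apply]
    calc d ≤ (Ordinal.typein ((· < ·) : c.ord.ToType → c.ord.ToType → Prop) s).card := h3
      _ ≤ (Ordinal.typein ((· < ·) : c.ord.ToType → c.ord.ToType → Prop) s).card ⊔ ℵ₀ :=
          le_sup_left
      _ < lam (e.symm ⟨s, hsS⟩) := by rw [hlam]; simp only [h4]; exact Order.lt_succ _
  set t : J → Cardinal.{u} := fun j => Order.succ (lam j ⊔ ℵ₀) with ht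
  have htreg : ∀ j, (t j).IsRegular := fun j => Cardinal.isRegular_succ le_sup_right
  have htc : ∀ j, t j < c := fun j => hlimit _ (sup_lt_iff.mpr ⟨hlamc j, hℵc⟩)
  have htlam : ∀ j, lam j < t j := fun j => lt_of_le_of_lt le_sup_left (Order.lt_succ _)
  have htℵ : ∀ j, ℵ₀ ≤ t j := fun j => le_of_lt (lt_of_le_of_lt le_sup_right (Order.lt_succ _))
  set Ydeg : Cardinal.{u} → Set W := fun ν => {y ∈ Y | #({w ∈ Y | r y w}) < ν} with hYdegdef
  have hkey : ∀ σ, σ < c → ∃ ν, ν < c ∧ σ < #(Ydeg ν) := by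
    intro σ hσ
    by_contra hno
    push_neg at hno
    have hcover : Y ⊆ ⋃ (j : J), Ydeg (lam j) := by
      intro y hy
      obtain ⟨j, hj⟩ := hlamcof (#({w ∈ Y | r y w})) (hYdeg y hy)
      exact Set.mem_iUnion.mpr ⟨j, hy, hj⟩
    have h1 : c ≤ #(⋃ (j : J), Ydeg (lam j)) := by
      calc c = #Y := hYcard.symm
        _ ≤ _ := Cardinal.mk_le_mk_of_subset hcover
    have h2 : #(⋃ (j : J), Ydeg (lam j)) ≤ ρ * σ := by
      calc #(⋃ (j : J), Ydeg (lam j)) ≤ Cardinal.sum (fun j : J => #(Ydeg (lam j))) :=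
            Cardinal.mk_iUnion_le_sum_mk
        _ ≤ Cardinal.sum (fun _ : J => σ) :=
            Cardinal.sum_le_sum _ _ (fun j => hno _ (hlamc j))
        _ = #J * σ := Cardinal.sum_const' _ _
        _ = ρ * σ := by rw [hJcard]
    exact absurd (le_trans h1 h2) (not_le.mpr (Cardinal.mul_lt_of_lt hW hρc hσ))
  have hncsub : ∀ (Z : Set W), ¬ InfClique (fun a b : ↥Z => r a.1 b.1) := by
    rintro Z ⟨g, hginj, hgr⟩
    exact hnc ⟨fun n => (g n).1, fun m n h => hginj (Subtype.ext h), fun m n h => hgr m n h⟩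
  set P : J → (Set W × Cardinal.{u}) → Prop := fun j p =>
    p.2 < c ∧ ℵ₀ ≤ p.2 ∧ p.1 ⊆ Y ∧ #p.1 = t j ∧ #p.1 ≤ p.2 ∧ IndepOn r p.1 ∧
      (∀ a ∈ p.1, #({w ∈ Y | r a w}) < p.2) with hP
  set bigF : ∀ (j : J), (∀ l, l < j → {p : Set W × Cardinal.{u} // P l p}) → Set W :=
    fun j ih => ⋃ (l : {x : J // x < j}), ((ih l.1 l.2).1.1 ∪
      ⋃ (a : ↥((ih l.1 l.2).1.1)), {w ∈ Y | r a.1 w}) with hbigF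
  have hstep : ∀ (j : J) (ih : ∀ l, l < j → {p : Set W × Cardinal.{u} // P l p}),
      ∃ p : Set W × Cardinal.{u}, P j p ∧ ∀ x ∈ p.1, x ∉ bigF j ih := by
    intro j ih
    have hι : #{x : J // x < j} < ρ := by
      have h2 := Cardinal.card_typein_toType_lt ρ j
      exact Cardinal.mk_Iio_toType_ord_lt j
    have hihP : ∀ l : {x : J // x < j}, P l.1 (ih l.1 l.2).1 := fun l => (ih l.1 l.2).2
    simp only [hP] at hihP
    set σ := (ρ ⊔ t j) ⊔ ⨆ (l : {x : J // x < j}), (ih l.1 l.2).1.2 with hσdef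
    have hσc : σ < c := by
      apply sup_lt_iff.mpr
      refine ⟨sup_lt_iff.mpr ⟨hρc, htc j⟩, ?_⟩
      exact Ordinal.iSup_lt (by rw [← hρ]; exact hι) (fun l => (hihP l).1)
    have hσℵ : ℵ₀ ≤ σ := le_trans hρℵ (le_trans le_sup_left le_sup_left)
    have htσ : t j ≤ σ := le_trans le_sup_right le_sup_left
    have hFcard : #(bigF j ih) ≤ σ := by
      have hpiece : ∀ l : {x : J // x < j},
          #(((ih l.1 l.2).1.1 ∪ ⋃ (a : ↥((ih l.1 l.2).1.1)), {w ∈ Y | r a.1 w} : Set W)) ≤ σ := by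
        intro l
        have hβσ : (ih l.1 l.2).1.2 ≤ σ :=
          le_trans (le_ciSup (Cardinal.bddAbove_range _) l) le_sup_right
        obtain ⟨hβc, hβℵ, hsubY, hcard, hcardβ, hind, hdegs⟩ := hihP l
        have h1 : #(⋃ (a : ↥((ih l.1 l.2).1.1)), {w ∈ Y | r a.1 w}) ≤ (ih l.1 l.2).1.2 := by
          calc #(⋃ (a : ↥((ih l.1 l.2).1.1)), {w ∈ Y | r a.1 w})
              ≤ Cardinal.sum (fun a : ↥((ih l.1 l.2).1.1) => #({w ∈ Y | r a.1 w})) :=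
                Cardinal.mk_iUnion_le_sum_mk
            _ ≤ Cardinal.sum (fun _ : ↥((ih l.1 l.2).1.1) => (ih l.1 l.2).1.2) :=
                Cardinal.sum_le_sum _ _ (fun a => (hdegs a.1 a.2).le)
            _ = #((ih l.1 l.2).1.1) * (ih l.1 l.2).1.2 := Cardinal.sum_const' _ _
            _ ≤ (ih l.1 l.2).1.2 * (ih l.1 l.2).1.2 := mul_le_mul' hcardβ le_rfl
            _ = (ih l.1 l.2).1.2 := Cardinal.mul_eq_self hβℵ
        calc #(((ih l.1 l.2).1.1 ∪ ⋃ (a : ↥((ih l.1 l.2).1.1)), {w ∈ Y | r a.1 w} : Set W))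
            ≤ #((ih l.1 l.2).1.1) + #(⋃ (a : ↥((ih l.1 l.2).1.1)), {w ∈ Y | r a.1 w}) :=
              Cardinal.mk_union_le _ _
          _ ≤ σ + σ := add_le_add (le_trans hcardβ hβσ) (le_trans h1 hβσ)
          _ = σ := Cardinal.add_eq_self hσℵ
      calc #(bigF j ih)
          ≤ Cardinal.sum (fun l : {x : J // x < j} => #(((ih l.1 l.2).1.1 ∪
            ⋃ (a : ↥((ih l.1 l.2).1.1)), {w ∈ Y | r a.1 w} : Set W))) := by
            rw [hbigF]; exact Cardinal.mk_iUnion_le_sum_mk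
        _ ≤ Cardinal.sum (fun _ : {x : J // x < j} => σ) := Cardinal.sum_le_sum _ _ hpiece
        _ = #{x : J // x < j} * σ := Cardinal.sum_const' _ _
        _ ≤ σ * σ := mul_le_mul' (le_of_lt (lt_of_lt_of_le hι
            (le_trans le_sup_left le_sup_left))) le_rfl
        _ = σ := Cardinal.mul_eq_self hσℵ
    obtain ⟨ν, hνc, hνY⟩ := hkey σ hσc
    have hZcard : t j ≤ #(Ydeg ν \ bigF j ih : Set W) := by
      by_contra hlt
      push_neg at hlt
      have h1 : #(Ydeg ν) ≤ #(Ydeg ν \ bigF j ih : Set W) + #(bigF j ih) :=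
        Cardinal.le_mk_diff_add_mk _ _
      have h2 : #(Ydeg ν \ bigF j ih : Set W) + #(bigF j ih) ≤ σ := by
        calc #(Ydeg ν \ bigF j ih : Set W) + #(bigF j ih) ≤ σ + σ :=
            add_le_add (le_trans hlt.le htσ) hFcard
          _ = σ := Cardinal.add_eq_self hσℵ
      exact absurd (le_trans h1 h2) (not_le.mpr hνY)
    obtain ⟨Z', hZ'sub, hZ'card⟩ := Cardinal.le_mk_iff_exists_subset.mp hZcard
    have hZ'reg : (#(↥Z')).IsRegular := by
      rw [show #(↥Z') = t j from hZ'card]; exact htreg j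
    obtain ⟨S', hS'card, hS'ind⟩ :=
      indep_of_regular (fun a b h => hsym h) (hncsub Z') hZ'reg
    refine ⟨(Subtype.val '' S', ν ⊔ (t j ⊔ σ)), ⟨?_, ?_, ?_, ?_, ?_, ?_, ?_⟩, ?_⟩
    · exact sup_lt_iff.mpr ⟨hνc, sup_lt_iff.mpr ⟨htc j, hσc⟩⟩
    · exact le_trans (htℵ j) (le_trans le_sup_left le_sup_right)
    · rintro _ ⟨a, ha, rfl⟩
      exact (hZ'sub a.2).1.1
    · rw [Cardinal.mk_image_eq Subtype.val_injective, hS'card, hZ'card]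
    · rw [Cardinal.mk_image_eq Subtype.val_injective, hS'card, hZ'card]
      exact le_trans le_sup_left le_sup_right
    · rintro _ ⟨a, ha, rfl⟩ _ ⟨b, hb, rfl⟩ hne hr
      exact hS'ind a ha b hb (fun h => hne (congrArg _ h)) hr
    · rintro _ ⟨a, ha, rfl⟩
      exact lt_of_lt_of_le (hZ'sub a.2).1.2 le_sup_left
    · rintro _ ⟨a, ha, rfl⟩ hmem
      exact (hZ'sub a.2).2 hmem
  set body : ∀ (j : J), (∀ l, l < j → {p : Set W × Cardinal.{u} // P l p}) →
      {p : Set W × Cardinal.{u} // P j p} :=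
    fun j ih => ⟨(hstep j ih).choose, (hstep j ih).choose_spec.1⟩ with hbody
  set f : ∀ j : J, {p : Set W × Cardinal.{u} // P j p} :=
    WellFounded.fix wellFounded_lt body with hfdef
  have hfix : ∀ j, f j = body j (fun l _ => f l) := fun j =>
    WellFounded.fix_eq wellFounded_lt body j
  set A : J → Set W := fun j => (f j).1.1 with hA
  have hAF : ∀ j, ∀ x ∈ A j, x ∉ bigF j (fun l _ => f l) := by
    intro j x hx
    have h1 := (hstep j (fun l _ => f l)).choose_spec.2
    apply h1
    have h2 : A j = (hstep j (fun l _ => f l)).choose.1 := by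
      rw [hA]; simp only; rw [hfix j]
    rwa [← h2]
  have hprops : ∀ j, P j (f j).1 := fun j => (f j).2
  simp only [hP] at hprops
  refine ⟨⋃ j, A j, ?_, ?_⟩
  · apply le_antisymm (Cardinal.mk_set_le _)
    by_contra hlt
    push_neg at hlt
    obtain ⟨j, hj⟩ := hlamcof _ hlt
    have h1 : t j ≤ #(⋃ j, A j) := by
      rw [← (hprops j).2.2.2.1]
      exact Cardinal.mk_le_mk_of_subset (Set.subset_iUnion A j)
    exact absurd h1 (not_le.mpr (lt_trans hj (htlam j)))
  · rintro x hx y hy hne hrxy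
    obtain ⟨j1, hj1⟩ := Set.mem_iUnion.mp hx
    obtain ⟨j2, hj2⟩ := Set.mem_iUnion.mp hy
    rcases lt_trichotomy j1 j2 with h | h | h
    · refine hAF j2 y hj2 (Set.mem_iUnion.mpr ⟨⟨j1, h⟩, Set.mem_union_right _
        (Set.mem_iUnion.mpr ⟨⟨x, hj1⟩, ⟨(hprops j2).2.2.1 hj2, hrxy⟩⟩)⟩)
    · subst h
      exact (hprops j1).2.2.2.2.2.1 x hj1 y hj2 hne hrxy
    · refine hAF j1 x hj1 (Set.mem_iUnion.mpr ⟨⟨j2, h⟩, Set.mem_union_right _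
        (Set.mem_iUnion.mpr ⟨⟨y, hj2⟩, ⟨(hprops j1).2.2.1 hj1, hsym hrxy⟩⟩)⟩)



theorem dem {W : Type u} (r : W → W → Prop) (hsym : Symmetric r) (hW : ℵ₀ ≤ #W) :
    (∃ g : ℕ → W, Function.Injective g ∧ ∀ m n, m ≠ n → r (g m) (g n)) ∨
    (∃ S : Set W, #S = #W ∧ IndepOn r S) := by
  by_cases h : InfClique r
  · exact Or.inl h
  by_cases hreg : (#W).IsRegular
  · exact Or.inr (indep_of_regular hsym h hreg)
  · exact Or.inr (indep_of_singular hsym h hW hreg)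

end St15
end St15Aux

open St15 Set in
/-- every `μ`-obstruction of type II contains a `K_μ` subgraph or,
for every positive `k`, an induced `K_{k,ω}`. -/
theorem stmt15 (μ κ : Cardinal.{0}) (hμ : ℵ₀ ≤ μ) (G : SimpleGraph Ordinal.{0})
    (h : IsTypeIIObstruction G μ κ) :
    HasCompleteSubgraph G (Cardinal.lift.{1} μ) ∨
      ∀ k : ℕ, 0 < k → HasInducedKkOmega G k := by
  classical
  obtain ⟨hμκ, hκreg, hedge, hstat⟩ := h
  by_cases hcs : HasCompleteSubgraph G (Cardinal.lift.{1} μ)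
  · exact Or.inl hcs
  refine Or.inr (fun k hk => ?_)
  have hℵκ : ℵ₀ < κ := lt_of_le_of_lt hμ hμκ
  have hliftμℵ : (ℵ₀ : Cardinal.{1}) ≤ Cardinal.lift.{1} μ := by
    rw [← Cardinal.lift_aleph0.{1,0}]
    exact Cardinal.lift_le.mpr hμ
  set T := typeIITarget G μ with hT
  have hT'stat : IsStationaryIn (T ∩ Set.Iio κ.ord) κ.ord := by
    intro C hC
    obtain ⟨x, ⟨hxT, hxC⟩, hxo⟩ := hstat C hC
    exact ⟨x, ⟨⟨hxT, hxo⟩, hxC⟩, hxo⟩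
  have hNcard : ∀ α ∈ T, #(G.neighborSet α ∩ Set.Iio α : Set Ordinal) = Cardinal.lift.{1} μ := by
    intro α hα
    obtain ⟨-, htype, -⟩ := hα
    have h1 := congrArg Ordinal.card htype
    rwa [Ordinal.card_type, ← Ordinal.lift_card, Cardinal.card_ord] at h1
  have hι : ∀ α ∈ T ∩ Set.Iio κ.ord, ∃ g : ℕ → Ordinal.{0}, Function.Injective g ∧
      (∀ n, g n ∈ G.neighborSet α ∩ Set.Iio α) ∧ (∀ m n, m ≠ n → ¬ G.Adj (g m) (g n)) := by
    intro α hα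
    have hNc : #(G.neighborSet α ∩ Set.Iio α : Set Ordinal) = Cardinal.lift.{1} μ :=
      hNcard α hα.1
    have hNℵ : ℵ₀ ≤ #(G.neighborSet α ∩ Set.Iio α : Set Ordinal) := by
      rw [hNc]; exact hliftμℵ
    have hsym' : Symmetric (fun a b : ↥(G.neighborSet α ∩ Set.Iio α) => ¬ G.Adj a.1 b.1) :=
      fun a b hne hadj => hne hadj.symm
    rcases dem _ hsym' hNℵ with ⟨g, hginj, hgr⟩ | ⟨S', hS'card, hS'ind⟩
    · exact ⟨fun n => (g n).1, fun m n hmn => hginj (Subtype.ext hmn),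
        fun n => (g n).2, fun m n hmn => hgr m n hmn⟩
    · exfalso
      apply hcs
      refine ⟨Subtype.val '' S', ?_, ?_⟩
      · rw [Cardinal.mk_image_eq Subtype.val_injective, hS'card, hNc]
      · rintro _ ⟨a, ha, rfl⟩ _ ⟨b, hb, rfl⟩ hne
        exact not_not.mp (hS'ind a ha b hb (fun hab => hne (congrArg _ hab)))
  choose! ι hι1 hι2 hι3 using hι
  have hrec : ∀ i : ℕ, ∃ (S : Set Ordinal.{0}) (b : ℕ → Ordinal.{0}),
      IsStationaryIn S κ.ord ∧ S ⊆ T ∩ Set.Iio κ.ord ∧ ∀ α ∈ S, ∀ l < i, ι α l = b l := by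
    intro i
    induction i with
    | zero =>
      exact ⟨T ∩ Set.Iio κ.ord, fun _ => 0, hT'stat, le_refl _,
        fun α _ l hl => absurd hl (Nat.not_lt_zero l)⟩
    | succ i ihi =>
      obtain ⟨S, b, hSstat, hSsub, hSb⟩ := ihi
      have hregr : ∀ α ∈ S, ι α i < α := fun α hα => (hι2 α (hSsub hα) i).2
      obtain ⟨c, hc⟩ := fodor hκreg hℵκ hSstat (fun α => ι α i) hregr
      refine ⟨{α | α ∈ S ∧ ι α i = c}, Function.update b i c, hc,
        fun α hα => hSsub hα.1, ?_⟩
      intro α hα l hl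
      rcases Nat.lt_succ_iff_lt_or_eq.mp hl with h | h
      · rw [Function.update_of_ne (by omega)]
        exact hSb α hα.1 l h
      · subst h
        rw [Function.update_self]
        exact hα.2
  obtain ⟨S, b, hSstat, hSsub, hSb⟩ := hrec k
  have hSne : ∃ α ∈ S, α < κ.ord := by
    obtain ⟨x, ⟨hx1, _⟩, hx3⟩ := hSstat Set.univ isClubIn_univ
    exact ⟨x, hx1, hx3⟩
  obtain ⟨α₀, hα₀, hα₀o⟩ := hSne
  have hbval : ∀ l, l < k → b l = ι α₀ l := fun l hl => (hSb α₀ hα₀ l hl).symm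
  have hbinj : ∀ l1 l2, l1 < k → l2 < k → b l1 = b l2 → l1 = l2 := by
    intro l1 l2 h1 h2 he
    rw [hbval l1 h1, hbval l2 h2] at he
    exact hι1 α₀ (hSsub hα₀) he
  have hbadj : ∀ α ∈ S, ∀ l, l < k → G.Adj α (b l) := by
    intro α hα l hl
    have h1 : G.Adj α (ι α l) := (hι2 α (hSsub hα) l).1
    rwa [hSb α hα l hl] at h1
  have hblt : ∀ α ∈ S, ∀ l, l < k → b l < α := by
    intro α hα l hl
    have h1 : ι α l < α := (hι2 α (hSsub hα) l).2
    rwa [hSb α hα l hl] at h1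
  have hbnadj : ∀ l1 l2, l1 < k → l2 < k → b l1 ≠ b l2 → ¬ G.Adj (b l1) (b l2) := by
    intro l1 l2 h1 h2 hne
    rw [hbval l1 h1, hbval l2 h2]
    refine hι3 α₀ (hSsub hα₀) l1 l2 (fun he => ?_)
    subst he
    exact hne rfl
  have hXsub : S ⊆ Set.Iio κ.ord := fun α hα => (hSsub hα).2
  have hXcard : Cardinal.lift.{1} μ ≤ #(↥S) := by
    have h1 := stationary_card hκreg hSstat
    rw [Set.inter_eq_self_of_subset_left hXsub] at h1
    exact le_trans (Cardinal.lift_le.mpr hμκ.le) h1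
  have hXℵ : ℵ₀ ≤ #(↥S) := le_trans hliftμℵ hXcard
  have hsymX : Symmetric (fun a b : ↥S => ¬ G.Adj a.1 b.1) := fun a b hne hadj => hne hadj.symm
  rcases dem _ hsymX hXℵ with ⟨g, hginj, hgr⟩ | ⟨S', hS'card, hS'ind⟩
  · -- build the induced K_{k,ω}
    set A : Set Ordinal.{0} := ↑((Finset.range k).image b) with hA
    set B : Set Ordinal.{0} := Set.range (fun n => (g n).1) with hB
    have hmemA : ∀ x, x ∈ A ↔ ∃ l, l < k ∧ b l = x := by
      intro x
      rw [hA, Finset.coe_image]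
      constructor
      · rintro ⟨l, hl, rfl⟩
        exact ⟨l, Finset.mem_range.mp (Finset.mem_coe.mp hl), rfl⟩
      · rintro ⟨l, hl, rfl⟩
        exact ⟨l, Finset.mem_coe.mpr (Finset.mem_range.mpr hl), rfl⟩
    have hmemBS : ∀ x, x ∈ B → x ∈ S := by
      rintro _ ⟨n, rfl⟩; exact (g n).2
    have hBinj : Function.Injective (fun n => ((g n).1 : Ordinal.{0})) :=
      fun m n hmn => hginj (Subtype.ext hmn)
    refine ⟨A, B, ?_, ?_, ?_, ?_, ?_, ?_⟩
    · rw [Set.disjoint_left]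
      intro x hxA hxB
      obtain ⟨l, hl, rfl⟩ := (hmemA x).mp hxA
      exact absurd (hblt _ (hmemBS _ hxB) l hl) (lt_irrefl _)
    · have h5 : #(↥A) = ((((Finset.range k).image b).card : ℕ) : Cardinal.{1}) := by
        rw [hA]; exact Cardinal.mk_coe_finset
      rw [h5, Finset.card_image_of_injOn
        (fun l1 h1 l2 h2 he => hbinj l1 l2 (Finset.mem_range.mp h1) (Finset.mem_range.mp h2) he),
        Finset.card_range]
    · apply le_antisymm
      · have hc : B.Countable := Set.countable_range _
        have := hc.to_subtype
        exact Cardinal.mk_le_aleph0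
      · have hinf : B.Infinite := Set.infinite_range_of_injective hBinj
        have := hinf.to_subtype
        exact Cardinal.aleph0_le_mk _
    · intro a haA β hβB
      obtain ⟨l, hl, rfl⟩ := (hmemA a).mp haA
      exact (hbadj β (hmemBS β hβB) l hl).symm
    · intro a haA a' ha'A hne
      obtain ⟨l1, h1, rfl⟩ := (hmemA a).mp haA
      obtain ⟨l2, h2, rfl⟩ := (hmemA a').mp ha'A
      exact hbnadj l1 l2 h1 h2 hne
    · rintro _ ⟨m, rfl⟩ _ ⟨n, rfl⟩ hne
      exact hgr m n (fun he => hne (congrArg (fun i => ((g i).1 : Ordinal.{0})) he))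
  · exfalso
    apply hcs
    have h4 : Cardinal.lift.{1} μ ≤ #(Subtype.val '' S' : Set Ordinal) := by
      rw [Cardinal.mk_image_eq Subtype.val_injective, hS'card]
      exact hXcard
    obtain ⟨S₀, hS₀sub, hS₀card⟩ := Cardinal.le_mk_iff_exists_subset.mp h4
    refine ⟨S₀, hS₀card, ?_⟩
    intro x hx y hy hne
    obtain ⟨a, ha, rfl⟩ := hS₀sub hx
    obtain ⟨c, hc, rfl⟩ := hS₀sub hy
    exact not_not.mp (hS'ind a ha c hc (fun hac => hne (congrArg _ hac)))
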